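/- In the poset [3]^n = {0,1,2}^n with levels P_0,…,P_{2n} by coordinate sum, for every i ≥ 1 and every x ∈ P_i we have d_{N^{i−1}(x)} − d^{i−1}(x) ≥ n − i, where d^{i−1}(x) is the number of elements of P_{i−1} below x that differ from x in one coordinate (equivalently all elements of P_{i−1} comparable to x) and d_{N^{i−1}(x)} = min{ d^i(w) : w ∈ N^{i−1}(x) } with d^i(w) the number of elements of P_i comparable to w. -/

import Mathlib

open Finset
open scoped Classical

/-- The lower-shadow neighborhood `N^{i−1}(x)`: the elements of level `i−1` of `[3]^n`
below `x`. -/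
noncomputable def lowerNbr (n i : ℕ) (x : Fin n → Fin 3) : Finset (Fin n → Fin 3) :=
  Finset.univ.filter (fun y => (∑ j, (y j : ℕ)) = i - 1 ∧ y < x)

/-- The up-degree `d^i(w)`: the number of elements of level `i` of `[3]^n` above `w`. -/
noncomputable def upDeg (n i : ℕ) (w : Fin n → Fin 3) : ℕ :=
  (Finset.univ.filter (fun z : Fin n → Fin 3 => (∑ j, (z j : ℕ)) = i ∧ w < z)).card

/-- decrement on `Fin 3` -/
def decF (v : Fin 3) : Fin 3 := ⟨(v : ℕ) - 1, by omega⟩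

/-- increment (capped) on `Fin 3` -/
def incF (v : Fin 3) : Fin 3 := ⟨min ((v : ℕ) + 1) 2, by omega⟩

lemma key (n : ℕ) (x y : Fin n → Fin 3) (hle : y ≤ x)
    (hsum : (∑ j, (x j : ℤ)) = (∑ j, (y j : ℤ)) + 1) :
    ∃ j, (y j : ℕ) + 1 = (x j : ℕ) ∧ ∀ k, k ≠ j → y k = x k := by
  have hnn : ∀ j, (0:ℤ) ≤ (x j : ℤ) - (y j : ℤ) := by
    intro j
    have := hle j
    have : (y j : ℕ) ≤ (x j : ℕ) := this
    omega
  have h1 : ∑ j, ((x j : ℤ) - (y j : ℤ)) = 1 := by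
    rw [Finset.sum_sub_distrib]; omega
  have hex : ∃ j ∈ Finset.univ, (0:ℤ) < (x j : ℤ) - (y j : ℤ) := by
    by_contra h
    push_neg at h
    have : ∑ j, ((x j : ℤ) - (y j : ℤ)) ≤ 0 :=
      Finset.sum_nonpos (fun j hj => h j hj)
    omega
  obtain ⟨j, -, hj⟩ := hex
  have hsplit : ((x j : ℤ) - (y j : ℤ)) + ∑ k ∈ Finset.univ.erase j, ((x k : ℤ) - (y k : ℤ)) = 1 := by
    rw [Finset.add_sum_erase Finset.univ (fun k => ((x k : ℤ) - (y k : ℤ))) (Finset.mem_univ j)]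
    exact h1
  have herase_nonneg : (0:ℤ) ≤ ∑ k ∈ Finset.univ.erase j, ((x k : ℤ) - (y k : ℤ)) :=
    Finset.sum_nonneg (fun k _ => hnn k)
  have hje : (x j : ℤ) - (y j : ℤ) = 1 := by omega
  have herase : ∑ k ∈ Finset.univ.erase j, ((x k : ℤ) - (y k : ℤ)) = 0 := by omega
  refine ⟨j, by omega, ?_⟩
  intro k hk
  have hk0 : (x k : ℤ) - (y k : ℤ) = 0 :=
    (Finset.sum_eq_zero_iff_of_nonneg (fun k _ => hnn k)).mp herase k
      (Finset.mem_erase.mpr ⟨hk, Finset.mem_univ k⟩)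
  have : (y k : ℕ) = (x k : ℕ) := by omega
  exact Fin.ext this

lemma sum_update_val (n : ℕ) (x : Fin n → Fin 3) (j : Fin n) (v : Fin 3) :
    (∑ k, ((Function.update x j v) k : ℕ)) + (x j : ℕ)
      = (∑ k, (x k : ℕ)) + (v : ℕ) := by
  rw [← Finset.add_sum_erase Finset.univ (fun k => ((Function.update x j v) k : ℕ))
        (Finset.mem_univ j),
      ← Finset.add_sum_erase Finset.univ (fun k => ((x k : ℕ))) (Finset.mem_univ j)]
  have h1 : ∑ k ∈ Finset.univ.erase j, ((Function.update x j v) k : ℕ)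
      = ∑ k ∈ Finset.univ.erase j, (x k : ℕ) :=
    Finset.sum_congr rfl (fun k hk => by
      rw [Function.update_of_ne (Finset.mem_erase.mp hk).1])
  simp only [h1, Function.update_self]
  omega

lemma lower_char (n i : ℕ) (hi : 1 ≤ i) (x y : Fin n → Fin 3)
    (hx : (∑ j, (x j : ℕ)) = i) (hy : y ∈ lowerNbr n i x) :
    ∃ j, (x j : ℕ) ≠ 0 ∧ y = Function.update x j (decF (x j)) := by
  rw [lowerNbr, Finset.mem_filter] at hy
  obtain ⟨-, hysum, hylt⟩ := hy
  have hle : y ≤ x := le_of_lt hylt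
  have hsum : (∑ j, (x j : ℤ)) = (∑ j, (y j : ℤ)) + 1 := by
    have h1 : (∑ j, (x j : ℤ)) = ((∑ j, (x j : ℕ) : ℕ) : ℤ) := by push_cast; rfl
    have h2 : (∑ j, (y j : ℤ)) = ((∑ j, (y j : ℕ) : ℕ) : ℤ) := by push_cast; rfl
    rw [h1, h2, hx, hysum]
    omega
  obtain ⟨j, hj1, hj2⟩ := key n x y hle hsum
  refine ⟨j, by omega, ?_⟩
  funext k
  by_cases hk : k = j
  · subst hk
    rw [Function.update_self]
    exact Fin.ext (by simp [decF]; omega)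
  · rw [Function.update_of_ne hk]
    exact hj2 k hk

lemma lower_nonempty (n i : ℕ) (hi : 1 ≤ i) (x : Fin n → Fin 3)
    (hx : (∑ j, (x j : ℕ)) = i) : (lowerNbr n i x).Nonempty := by
  have hex : ∃ j, (x j : ℕ) ≠ 0 := by
    by_contra h
    push_neg at h
    have : (∑ j, (x j : ℕ)) = 0 := Finset.sum_eq_zero (fun j _ => h j)
    omega
  obtain ⟨j, hj⟩ := hex
  refine ⟨Function.update x j (decF (x j)), ?_⟩
  rw [lowerNbr, Finset.mem_filter]
  have hsum := sum_update_val n x j (decF (x j))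
  have hdv : ((decF (x j)) : ℕ) = (x j : ℕ) - 1 := rfl
  refine ⟨Finset.mem_univ _, by omega, ?_⟩
  rw [lt_iff_le_and_ne]
  constructor
  · intro k
    by_cases hk : k = j
    · subst hk
      rw [Function.update_self]
      show ((decF (x k)) : ℕ) ≤ (x k : ℕ)
      rw [hdv]; omega
    · rw [Function.update_of_ne hk]
  · intro heq
    have := congrFun heq j
    rw [Function.update_self] at this
    have : ((decF (x j)) : ℕ) = (x j : ℕ) := congrArg Fin.val this
    rw [hdv] at this
    omega

lemma card_lower_le (n i : ℕ) (hi : 1 ≤ i) (x : Fin n → Fin 3)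
    (hx : (∑ j, (x j : ℕ)) = i) :
    (lowerNbr n i x).card ≤ (Finset.univ.filter (fun k => (x k : ℕ) ≠ 0)).card := by
  have hsub : lowerNbr n i x ⊆
      (Finset.univ.filter (fun k => (x k : ℕ) ≠ 0)).image
        (fun j => Function.update x j (decF (x j))) := by
    intro y hy
    obtain ⟨j, hj1, hj2⟩ := lower_char n i hi x y hx hy
    exact Finset.mem_image.mpr ⟨j, Finset.mem_filter.mpr ⟨Finset.mem_univ _, hj1⟩, hj2.symm⟩
  calc (lowerNbr n i x).card ≤ _ := Finset.card_le_card hsub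
    _ ≤ _ := Finset.card_image_le

lemma upDeg_ge (n i : ℕ) (hi : 1 ≤ i) (x w : Fin n → Fin 3)
    (hx : (∑ j, (x j : ℕ)) = i) (hw : w ∈ lowerNbr n i x) :
    (Finset.univ.filter (fun k => (x k : ℕ) ≠ 2)).card ≤ upDeg n i w := by
  rw [lowerNbr, Finset.mem_filter] at hw
  obtain ⟨-, hwsum, hwlt⟩ := hw
  have hle : w ≤ x := le_of_lt hwlt
  apply Finset.card_le_card_of_injOn (fun k => Function.update w k (incF (w k)))
  · intro k hk
    rw [Finset.mem_coe, Finset.mem_filter] at hk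
    have hxk : (x k : ℕ) ≠ 2 := hk.2
    have hwk : (w k : ℕ) ≤ 1 := by
      have : (w k : ℕ) ≤ (x k : ℕ) := hle k
      have := (x k).isLt
      omega
    have hiv : ((incF (w k)) : ℕ) = (w k : ℕ) + 1 := by simp [incF]; omega
    simp only [Finset.mem_coe, Finset.mem_filter]
    have hsum := sum_update_val n w k (incF (w k))
    refine ⟨Finset.mem_univ _, by omega, ?_⟩
    rw [lt_iff_le_and_ne]
    constructor
    · intro k'
      by_cases hk' : k' = k
      · subst hk'
        rw [Function.update_self]
        show (w k' : ℕ) ≤ ((incF (w k')) : ℕ)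
        omega
      · rw [Function.update_of_ne hk']
    · intro heq
      have := congrFun heq.symm k
      rw [Function.update_self] at this
      have : ((incF (w k)) : ℕ) = (w k : ℕ) := congrArg Fin.val this
      omega
  · intro k hk k' hk' heq
    by_contra hne
    have h1 : Function.update w k (incF (w k)) k = Function.update w k' (incF (w k')) k :=
      congrFun heq k
    rw [Function.update_self, Function.update_of_ne hne] at h1
    simp only [Finset.mem_coe, Finset.mem_filter] at hk
    have hwk : (w k : ℕ) ≤ 1 := by
      have h2 : (w k : ℕ) ≤ (x k : ℕ) := hle k
      have := (x k).isLt
      have := hk.2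
      omega
    have : ((incF (w k)) : ℕ) = (w k : ℕ) := congrArg Fin.val h1
    simp [incF] at this
    omega

lemma AB (n : ℕ) (x : Fin n → Fin 3) :
    ((Finset.univ.filter (fun k => (x k : ℕ) ≠ 2)).card : ℤ)
      - ((Finset.univ.filter (fun k => (x k : ℕ) ≠ 0)).card : ℤ)
      = (n : ℤ) - (∑ k, (x k : ℕ) : ℕ) := by
  rw [Finset.card_filter, Finset.card_filter]
  push_cast
  rw [← Finset.sum_sub_distrib]
  have h : ∑ k, ((if (x k : ℕ) ≠ 2 then (1:ℤ) else 0) - (if (x k : ℕ) ≠ 0 then (1:ℤ) else 0))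
      = ∑ k : Fin n, (1 - (x k : ℤ)) := by
    apply Finset.sum_congr rfl
    intro k _
    have := (x k).isLt
    have hcast : ((x k : ℕ) : ℤ) = (x k : ℤ) := rfl
    split_ifs <;> omega
  rw [h, Finset.sum_sub_distrib]
  simp [Finset.card_univ]

/-- In `[3]^n`, for every `i ≥ 1` and `x` in level `P_i`,
`d_{N^{i−1}(x)} − d^{i−1}(x) ≥ n − i`, where
`d_{N^{i−1}(x)} = min { d^i(w) : w ∈ N^{i−1}(x) }` and `d^{i−1}(x) = |N^{i−1}(x)|`. -/
theorem stmt17 (n i : ℕ) (hi : 1 ≤ i) (x : Fin n → Fin 3)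
    (hx : (∑ j, (x j : ℕ)) = i) :
    ((n : ℤ) - i) ≤
      ((WithTop.untopD 0 ((lowerNbr n i x).image (upDeg n i)).min : ℕ) : ℤ) -
        ((lowerNbr n i x).card : ℤ) := by
  have hne := lower_nonempty n i hi x hx
  have himg : ((lowerNbr n i x).image (upDeg n i)).Nonempty := hne.image _
  obtain ⟨m, hmin⟩ := Finset.min_of_nonempty himg
  have hmem := Finset.mem_of_min hmin
  obtain ⟨w, hwN, hwm⟩ := Finset.mem_image.mp hmem
  have hA : (Finset.univ.filter (fun k => (x k : ℕ) ≠ 2)).card ≤ m := by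
    rw [← hwm]; exact upDeg_ge n i hi x w hx hwN
  have hB := card_lower_le n i hi x hx
  have hAB := AB n x
  rw [hx] at hAB
  rw [hmin, WithTop.untopD_coe]
  have hAz : ((Finset.univ.filter (fun k => (x k : ℕ) ≠ 2)).card : ℤ) ≤ (m : ℤ) := by
    exact_mod_cast hA
  have hBz : ((lowerNbr n i x).card : ℤ) ≤ ((Finset.univ.filter (fun k => (x k : ℕ) ≠ 0)).card : ℤ) := by
    exact_mod_cast hB
  omega
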